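/- Let C and D be r×r real matrices with r ≥ 1 and C invertible. Then lim sup_{n→∞} | tr( C⁻¹ · (D·C⁻¹)^n · D ) |^{1/n} = ρ(D·C⁻¹), the spectral radius of the matrix D·C⁻¹, where tr denotes the trace and the lim sup is taken over n ≥ 1. -/

import Mathlib

open Polynomial Matrix Filter

section Aux
variable {r : ℕ}

lemma eval_charpoly'' {n : Type*} [DecidableEq n] [Fintype n] {R : Type*} [CommRing R]
    (M : Matrix n n R) (x : R) :
    M.charpoly.eval x = (Matrix.scalar n x - M).det := by
  rw [Matrix.charpoly, _root_.eval_det, matPolyEquiv_charmatrix]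
  simp

lemma det_sub_scalar (hr : 1 ≤ r) (A : Matrix (Fin r) (Fin r) ℂ) (w : ℂ) :
    (A - Matrix.scalar (Fin r) w).det
      = (A.charpoly.roots.map fun μ => μ - w).prod := by
  have hsplit : A.charpoly.Splits := IsAlgClosed.splits _
  have hcard : A.charpoly.roots.card = r := by
    rw [Polynomial.splits_iff_card_roots.mp hsplit, Matrix.charpoly_natDegree_eq_dim]
    simp
  have h1 : A - Matrix.scalar (Fin r) w = (-1 : ℂ) • (Matrix.scalar (Fin r) w - A) := by
    rw [neg_one_smul, neg_sub]
  rw [h1, Matrix.det_smul, ← eval_charpoly'']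
  have h2 : A.charpoly.eval w = (A.charpoly.roots.map fun μ => w - μ).prod := by
    conv_lhs => rw [hsplit.eq_prod_roots_of_monic A.charpoly_monic]
    rw [Polynomial.eval_multiset_prod, Multiset.map_map]
    simp
  rw [h2]
  have h3 : (A.charpoly.roots.map fun μ => μ - w)
      = (A.charpoly.roots.map fun μ => (-1 : ℂ) * (w - μ)) := by
    apply Multiset.map_congr rfl; intro μ _; ring
  rw [h3]
  have h4 := Multiset.prod_map_mul (m := A.charpoly.roots)
      (f := fun _ => (-1 : ℂ)) (g := fun μ => w - μ)
  rw [h4, Multiset.map_const', Multiset.prod_replicate, hcard]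
  simp [Fintype.card_fin]

lemma det_aeval_multiset (A : Matrix (Fin r) (Fin r) ℂ) (s : Multiset ℂ) :
    ((Polynomial.aeval A) ((s.map fun w => X - C w).prod)).det
      = (s.map fun w => (A - Matrix.scalar (Fin r) w).det).prod := by
  induction s using Multiset.induction_on with
  | empty => simp
  | cons w s ih =>
      rw [Multiset.map_cons, Multiset.prod_cons, _root_.map_mul, Matrix.det_mul,
        Multiset.map_cons, Multiset.prod_cons, ← ih]
      congr 1
      rw [map_sub, aeval_X, aeval_C]
      rfl

lemma det_aeval_eq (hr : 1 ≤ r) (A : Matrix (Fin r) (Fin r) ℂ) (p : ℂ[X]) :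
    ((Polynomial.aeval A) p).det = (A.charpoly.roots.map fun μ => p.eval μ).prod := by
  have : Nonempty (Fin r) := ⟨⟨0, hr⟩⟩
  have hsplitc : A.charpoly.Splits := IsAlgClosed.splits _
  have hcard : A.charpoly.roots.card = r := by
    rw [Polynomial.splits_iff_card_roots.mp hsplitc, Matrix.charpoly_natDegree_eq_dim]
    simp
  rcases eq_or_ne p 0 with rfl | hp
  · rw [map_zero]
    have h0 : (0 : ℂ) ∈ A.charpoly.roots.map fun μ => (0 : ℂ[X]).eval μ := by
      have : A.charpoly.roots ≠ 0 := by
        intro h; rw [h] at hcard; simp at hcard; omega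
      obtain ⟨μ, hμ⟩ := Multiset.exists_mem_of_ne_zero this
      simpa using Multiset.mem_map_of_mem (fun μ => (0 : ℂ[X]).eval μ) hμ
    rw [Multiset.prod_eq_zero h0, Matrix.det_zero]
  · have hps : p.Splits := IsAlgClosed.splits _
    have hfact := hps.eq_prod_roots
    conv_lhs => rw [hfact]
    rw [_root_.map_mul, Matrix.det_mul, aeval_C, det_aeval_multiset]
    have hCdet : ((algebraMap ℂ (Matrix (Fin r) (Fin r) ℂ)) p.leadingCoeff).det
        = p.leadingCoeff ^ r := by
      rw [Matrix.algebraMap_eq_diagonal]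
      simp [Matrix.det_diagonal, Finset.prod_const]
    rw [hCdet]
    -- rewrite each det factor
    have h1 : (p.roots.map fun w => (A - Matrix.scalar (Fin r) w).det).prod
        = (p.roots.map fun w => (A.charpoly.roots.map fun μ => μ - w).prod).prod := by
      congr 1
      exact Multiset.map_congr rfl fun w _ => det_sub_scalar hr A w
    rw [h1, Multiset.prod_map_prod_map]
    have h2 : ∀ μ, (p.roots.map fun w => μ - w).prod
        = (p.roots.map fun w => X - C w).prod.eval μ := by
      intro μ
      rw [Polynomial.eval_multiset_prod, Multiset.map_map]
      simp
    calc p.leadingCoeff ^ r * (A.charpoly.roots.map fun μ => (p.roots.map fun w => μ - w).prod).prod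
        = (A.charpoly.roots.map fun μ =>
            p.leadingCoeff * (p.roots.map fun w => μ - w).prod).prod := by
          rw [Multiset.prod_map_mul (f := fun _ => p.leadingCoeff)
            (g := fun μ => (p.roots.map fun w => μ - w).prod),
            Multiset.map_const', Multiset.prod_replicate, hcard]
      _ = (A.charpoly.roots.map fun μ => p.eval μ).prod := by
          apply congrArg; apply Multiset.map_congr rfl
          intro μ _
          conv_rhs => rw [hfact]
          rw [eval_mul, eval_C, h2]

lemma trace_pow_eq (hr : 1 ≤ r) (A : Matrix (Fin r) (Fin r) ℂ) (n : ℕ) :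
    (A ^ n).trace = (A.charpoly.roots.map fun μ => μ ^ n).sum := by
  have key : (A ^ n).charpoly
      = ((A.charpoly.roots.map fun μ => μ ^ n).map fun a => X - C a).prod := by
    apply Polynomial.funext
    intro z
    rw [eval_charpoly'']
    have hA : Matrix.scalar (Fin r) z - A ^ n = (Polynomial.aeval A) (C z - X ^ n) := by
      rw [map_sub, aeval_C, map_pow, aeval_X]; rfl
    rw [hA, det_aeval_eq hr, Polynomial.eval_multiset_prod, Multiset.map_map, Multiset.map_map]
    apply congrArg
    apply Multiset.map_congr rfl
    intro μ _
    simp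
  rw [Matrix.trace_eq_sum_roots_charpoly, key, Polynomial.roots_multiset_prod_X_sub_C]

lemma multiset_exists_eq_sup (s : Multiset NNReal) (h : s ≠ 0) : ∃ a ∈ s, s.sup = a := by
  induction s using Multiset.induction_on with
  | empty => simp at h
  | cons a s ih =>
    rcases eq_or_ne s 0 with rfl | hs
    · exact ⟨a, by simp, by simp⟩
    · obtain ⟨b, hb, hbe⟩ := ih hs
      rw [Multiset.sup_cons, hbe]
      rcases le_total a b with h' | h'
      · exact ⟨b, Multiset.mem_cons_of_mem hb, sup_eq_right.2 h'⟩
      · exact ⟨a, Multiset.mem_cons_self a s, sup_eq_left.2 h'⟩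

lemma limsup_powsum (m : Multiset ℂ) (hm : m ≠ 0) :
    Filter.limsup (fun n : ℕ => ‖(m.map fun μ => μ ^ (n + 1)).sum‖ ^ ((1 : ℝ) / n))
      Filter.atTop = (((m.map fun z => ‖z‖₊).sup : NNReal) : ℝ) := by
  set ρ : ℝ := (((m.map fun z => ‖z‖₊).sup : NNReal) : ℝ) with hρdef
  set p : ℕ → ℂ := fun k => (m.map fun μ => μ ^ k).sum with hp
  set f : ℕ → ℝ := fun n => ‖p (n + 1)‖ ^ ((1 : ℝ) / n) with hf
  have hρ0 : (0 : ℝ) ≤ ρ := NNReal.coe_nonneg _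
  have hle : ∀ μ ∈ m, ‖μ‖ ≤ ρ := by
    intro μ hμ
    have h1 : ‖μ‖₊ ≤ (m.map fun z => ‖z‖₊).sup :=
      Multiset.le_sup (Multiset.mem_map_of_mem _ hμ)
    exact_mod_cast h1
  obtain ⟨μ₀, hμ₀m, hμ₀⟩ : ∃ μ ∈ m, ‖μ‖ = ρ := by
    obtain ⟨a, ha, hae⟩ := multiset_exists_eq_sup (m.map fun z => ‖z‖₊) (by simpa using hm)
    obtain ⟨μ, hμm, hμa⟩ := Multiset.mem_map.mp ha
    exact ⟨μ, hμm, by rw [hρdef, hae, ← hμa]; rfl⟩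
  by_cases hρz : ρ = 0
  · have hall : ∀ μ ∈ m, μ = 0 := fun μ hμ => norm_le_zero_iff.mp (hρz ▸ hle μ hμ)
    have hpz : ∀ n : ℕ, p (n + 1) = 0 := by
      intro n
      apply Multiset.sum_eq_zero
      intro x hx
      obtain ⟨μ, hμm, rfl⟩ := Multiset.mem_map.mp hx
      rw [hall μ hμm, zero_pow (Nat.succ_ne_zero n)]
    have hevf : ∀ᶠ n in atTop, f n = 0 := by
      filter_upwards [eventually_ge_atTop 1] with n hn
      rw [hf]
      simp only
      rw [hpz, norm_zero, Real.zero_rpow]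
      · simp
        omega
    rw [Filter.limsup_congr hevf, Filter.limsup_const, hρz]
  have hρpos : 0 < ρ := lt_of_le_of_ne hρ0 (Ne.symm hρz)
  set c : ℝ := (Multiset.card m : ℝ) with hc
  have hc1 : (1 : ℝ) ≤ c := by
    rw [hc]
    exact_mod_cast Nat.one_le_iff_ne_zero.mpr (by simpa using hm)
  have hpb : ∀ k : ℕ, ‖p k‖ ≤ c * ρ ^ k := by
    intro k
    calc ‖p k‖ ≤ (m.map fun μ => ‖μ ^ k‖).sum := by
          rw [hp]; exact norm_multiset_sum_le _ |>.trans_eq (by rw [Multiset.map_map]; rfl)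
      _ ≤ (Multiset.card (m.map fun μ => ‖μ ^ k‖)) • (ρ ^ k) := by
          apply Multiset.sum_le_card_nsmul
          intro x hx
          obtain ⟨μ, hμm, rfl⟩ := Multiset.mem_map.mp hx
          rw [norm_pow]
          exact pow_le_pow_left₀ (norm_nonneg _) (hle μ hμm) k
      _ = c * ρ ^ k := by rw [Multiset.card_map, nsmul_eq_mul, hc]
  set g : ℕ → ℝ := fun n => (c * ρ) ^ ((1 : ℝ) / n) * ρ with hg
  have hcρ : 0 < c * ρ := by nlinarith
  have hfg : ∀ᶠ n in atTop, f n ≤ g n := by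
    filter_upwards [eventually_ge_atTop 1] with n hn
    have hn0 : (n : ℝ) ≠ 0 := Nat.cast_ne_zero.mpr (by omega)
    have h1 : f n ≤ (c * ρ ^ (n + 1)) ^ ((1 : ℝ) / n) :=
      Real.rpow_le_rpow (norm_nonneg _) (hpb (n + 1)) (by positivity)
    have h2 : (c * ρ ^ (n + 1)) ^ ((1 : ℝ) / n) = g n := by
      rw [hg]
      simp only
      have : c * ρ ^ (n + 1) = (c * ρ) * ρ ^ n := by ring
      rw [this, Real.mul_rpow hcρ.le (by positivity), ← Real.rpow_natCast ρ n,
        ← Real.rpow_mul hρ0]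
      rw [mul_one_div, div_self hn0, Real.rpow_one]
    rw [← h2]; exact h1
  have htend : Filter.Tendsto g atTop (nhds ρ) := by
    have h1 : Filter.Tendsto (fun n : ℕ => (c * ρ) ^ ((1 : ℝ) / n)) atTop (nhds 1) := by
      have hcont : Filter.Tendsto (fun x : ℝ => (c * ρ) ^ x) (nhds 0) (nhds 1) := by
        have heq : (fun x : ℝ => (c * ρ) ^ x) = fun x => Real.exp (Real.log (c * ρ) * x) := by
          funext x; rw [Real.rpow_def_of_pos hcρ]
        rw [heq]
        have hco : Continuous (fun x : ℝ => Real.exp (Real.log (c * ρ) * x)) :=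
          Real.continuous_exp.comp (continuous_const.mul continuous_id)
        have := hco.tendsto 0
        simpa using this
      exact hcont.comp tendsto_one_div_atTop_nhds_zero_nat
    have := h1.mul_const ρ
    rw [hg]
    simpa only [one_mul] using this
  have hevgρ : ∀ᶠ n in atTop, g n ≤ ρ + 1 :=
    htend.eventually_le_const (by linarith)
  have hevfρ : ∀ᶠ n in atTop, f n ≤ ρ + 1 := by
    filter_upwards [hfg, hevgρ] with n h1 h2 using h1.trans h2
  have hbddf : Filter.IsBoundedUnder (· ≤ ·) atTop f := ⟨ρ + 1, hevfρ⟩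
  have hup : Filter.limsup f atTop ≤ ρ := by
    have h1 := Filter.limsup_le_limsup hfg
      (isCoboundedUnder_le_of_le atTop fun n => Real.rpow_nonneg (norm_nonneg _) _) htend.isBoundedUnder_le
    rwa [htend.limsup_eq] at h1
  refine le_antisymm hup (not_lt.1 fun hlt => ?_)
  set L := Filter.limsup f atTop with hL
  set x : ℝ := (max L 0 + ρ) / 2 with hx
  have hmax : max L 0 < ρ := max_lt hlt hρpos
  have hxpos : 0 < x := by
    have := le_max_right L 0
    rw [hx]; linarith
  have hxρ : x < ρ := by rw [hx]; linarith
  have hLx : L < x := by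
    have := le_max_left L 0
    rw [hx]; linarith
  have hev : ∀ᶠ n in atTop, f n < x := Filter.eventually_lt_of_limsup_lt hLx hbddf
  have hev2 : ∀ᶠ n in atTop, ‖p (n + 1)‖ ≤ x ^ n := by
    filter_upwards [hev, eventually_ge_atTop 1] with n hn hn1
    have hn0 : (n : ℝ) ≠ 0 := Nat.cast_ne_zero.mpr (by omega)
    have h0 : (0 : ℝ) ≤ f n := Real.rpow_nonneg (norm_nonneg _) _
    have heq : (f n) ^ n = ‖p (n + 1)‖ := by
      rw [hf]
      simp only
      rw [← Real.rpow_natCast (‖p (n + 1)‖ ^ ((1 : ℝ) / n)) n,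
        ← Real.rpow_mul (norm_nonneg _), one_div_mul_cancel hn0, Real.rpow_one]
    calc ‖p (n + 1)‖ = (f n) ^ n := heq.symm
      _ ≤ x ^ n := pow_le_pow_left₀ h0 hn.le n
  obtain ⟨N, hN⟩ := Filter.eventually_atTop.mp hev2
  have hsumd : Summable (fun n : ℕ => ‖p n‖ / ρ ^ n) := by
    rw [← summable_nat_add_iff (N + 1)]
    have hxρ2 : x / ρ < 1 := by rw [div_lt_one hρpos]; exact hxρ
    refine Summable.of_nonneg_of_le (fun n => by positivity) (fun n => ?_)
      ((summable_geometric_of_lt_one (by positivity) hxρ2).mul_left (x ^ N / ρ ^ (N + 1)))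
    have h1 : ‖p (n + N + 1)‖ ≤ x ^ (n + N) := hN (n + N) (Nat.le_add_left N n)
    have h2 : ‖p (n + (N + 1))‖ ≤ x ^ (n + N) := by
      rw [show n + (N + 1) = n + N + 1 by ring]; exact h1
    have h3 : (x ^ N / ρ ^ (N + 1)) * (x / ρ) ^ n = x ^ (n + N) / ρ ^ (n + (N + 1)) := by
      rw [div_pow x ρ n, div_mul_div_comm, ← pow_add, ← pow_add]
      rw [show N + n = n + N from Nat.add_comm N n, show N + 1 + n = n + (N + 1) from by omega]
    rw [h3]
    gcongr
  set CC : ℝ := ∑' n, ‖p n‖ / ρ ^ n with hCC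
  have hμ₀0 : μ₀ ≠ 0 := by
    intro h
    rw [h, norm_zero] at hμ₀
    exact hρz hμ₀.symm
  set T := m.toFinset with hT
  have hμ₀T : μ₀ ∈ T := Multiset.mem_toFinset.mpr hμ₀m
  set H : ℝ → ℂ := fun s => ∑ μ ∈ T, (m.count μ : ℂ) * (1 - μ * ((s : ℂ) / μ₀))⁻¹ with hH
  have hHb : ∀ s : ℝ, s ∈ Set.Ioo (0 : ℝ) 1 → ‖H s‖ ≤ CC := by
    intro s hs
    set z : ℂ := (s : ℂ) / μ₀ with hz
    have hznorm : ‖z‖ = s / ρ := by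
      rw [hz, norm_div, hμ₀, Complex.norm_real, Real.norm_eq_abs, abs_of_pos hs.1]
    have hμz : ∀ μ ∈ m, ‖μ * z‖ < 1 := by
      intro μ hμ
      rw [norm_mul, hznorm]
      have h1 : ‖μ‖ * (s / ρ) ≤ ρ * (s / ρ) :=
        mul_le_mul_of_nonneg_right (hle μ hμ) (div_nonneg hs.1.le hρ0)
      have h2 : ρ * (s / ρ) = s := by field_simp
      calc ‖μ‖ * (s / ρ) ≤ ρ * (s / ρ) := h1
        _ = s := h2
        _ < 1 := hs.2
    have hsum : HasSum (fun n : ℕ => p n * z ^ n) (H s) := by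
      have h1 : ∀ μ ∈ T, HasSum (fun n : ℕ => (m.count μ : ℂ) * (μ * z) ^ n)
          ((m.count μ : ℂ) * (1 - μ * z)⁻¹) := fun μ hμ =>
        (hasSum_geometric_of_norm_lt_one (hμz μ (Multiset.mem_toFinset.mp hμ))).mul_left _
      have h2 := hasSum_sum h1
      have h3 : (fun n : ℕ => ∑ μ ∈ T, (m.count μ : ℂ) * (μ * z) ^ n)
          = fun n : ℕ => p n * z ^ n := by
        funext n
        rw [hp]
        simp only
        rw [Finset.sum_multiset_map_count, Finset.sum_mul]
        apply Finset.sum_congr rfl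
        intro μ hμ
        rw [mul_pow, nsmul_eq_mul]
        ring
      rw [h3] at h2
      exact h2
    have hbd : ∀ n : ℕ, ‖p n * z ^ n‖ ≤ ‖p n‖ / ρ ^ n := by
      intro n
      rw [norm_mul, norm_pow, hznorm]
      have h1 : (s / ρ) ^ n ≤ (1 / ρ) ^ n := by
        gcongr
        · exact div_nonneg hs.1.le hρ0
        · exact hs.2.le
      calc ‖p n‖ * (s / ρ) ^ n ≤ ‖p n‖ * (1 / ρ) ^ n :=
          mul_le_mul_of_nonneg_left h1 (norm_nonneg _)
        _ = ‖p n‖ / ρ ^ n := by rw [div_pow, one_pow, mul_one_div]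
    have hns : Summable (fun n : ℕ => ‖p n * z ^ n‖) :=
      Summable.of_nonneg_of_le (fun n => norm_nonneg _) hbd hsumd
    calc ‖H s‖ = ‖∑' n, p n * z ^ n‖ := by rw [hsum.tsum_eq]
      _ ≤ ∑' n, ‖p n * z ^ n‖ := norm_tsum_le_tsum_norm hns
      _ ≤ CC := Summable.tsum_le_tsum hbd hns hsumd
  set cnt : ℝ := (m.count μ₀ : ℝ) with hcnt
  have hcnt1 : (1 : ℝ) ≤ cnt := by
    rw [hcnt]
    exact_mod_cast Multiset.one_le_count_iff_mem.mpr hμ₀m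
  set R : ℝ → ℂ := fun s =>
    ∑ μ ∈ T.erase μ₀, (m.count μ : ℂ) * (1 - μ * ((s : ℂ) / μ₀))⁻¹ with hR
  have hsplitH : ∀ s : ℝ,
      H s = (m.count μ₀ : ℂ) * (1 - μ₀ * ((s : ℂ) / μ₀))⁻¹ + R s := by
    intro s
    rw [hH, hR]
    simp only
    exact (Finset.add_sum_erase T _ hμ₀T).symm
  have hmainden : ∀ s : ℝ, (1 : ℂ) - μ₀ * ((s : ℂ) / μ₀) = ((1 - s : ℝ) : ℂ) := by
    intro s
    have : μ₀ * ((s : ℂ) / μ₀) = (s : ℂ) := by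
      field_simp
    rw [this]
    push_cast
    ring
  have hRlim : Filter.Tendsto R (nhdsWithin 1 (Set.Iio (1 : ℝ))) (nhds (R 1)) := by
    have h1 : Filter.Tendsto R (nhds (1 : ℝ)) (nhds (R 1)) := by
      rw [hR]
      simp only
      apply tendsto_finset_sum
      intro μ hμ
      have hμne : μ ≠ μ₀ := Finset.ne_of_mem_erase hμ
      have hden : (1 : ℂ) - μ * (((1 : ℝ) : ℂ) / μ₀) ≠ 0 := by
        intro h
        apply hμne
        have h2 : μ * (((1 : ℝ) : ℂ) / μ₀) = 1 := by
          have := sub_eq_zero.mp h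
          exact this.symm
        field_simp at h2
        simpa using h2
      have hinner : Filter.Tendsto (fun s : ℝ => (1 : ℂ) - μ * ((s : ℂ) / μ₀)) (nhds 1)
          (nhds ((1 : ℂ) - μ * (((1 : ℝ) : ℂ) / μ₀))) := by
        apply Filter.Tendsto.const_sub
        exact Filter.Tendsto.const_mul μ ((Complex.continuous_ofReal.tendsto 1).div_const μ₀)
      exact Filter.Tendsto.mul tendsto_const_nhds (hinner.inv₀ hden)
    exact h1.mono_left nhdsWithin_le_nhds
  have hRbdd : ∀ᶠ s in nhdsWithin (1 : ℝ) (Set.Iio 1), ‖R s‖ ≤ ‖R 1‖ + 1 :=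
    (hRlim.norm.eventually_lt_const (lt_add_one ‖R 1‖)).mono fun s hs => hs.le
  have hmono : ∀ᶠ s in nhdsWithin (1 : ℝ) (Set.Iio 1),
      cnt * (1 - s)⁻¹ - (‖R 1‖ + 1) ≤ ‖H s‖ := by
    filter_upwards [hRbdd, self_mem_nhdsWithin] with s hRs hsIio
    have hs1 : s < 1 := hsIio
    have hnorm_main : ‖(m.count μ₀ : ℂ) * (1 - μ₀ * ((s : ℂ) / μ₀))⁻¹‖
        = cnt * (1 - s)⁻¹ := by
      rw [hmainden s, norm_mul, norm_inv, Complex.norm_real, Real.norm_eq_abs,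
        abs_of_pos (by linarith : (0 : ℝ) < 1 - s), Complex.norm_natCast, hcnt]
    have htriangle := norm_sub_norm_le
      ((m.count μ₀ : ℂ) * (1 - μ₀ * ((s : ℂ) / μ₀))⁻¹) (-(R s))
    rw [norm_neg, sub_neg_eq_add] at htriangle
    rw [hsplitH s]
    calc cnt * (1 - s)⁻¹ - (‖R 1‖ + 1)
        ≤ ‖(m.count μ₀ : ℂ) * (1 - μ₀ * ((s : ℂ) / μ₀))⁻¹‖ - ‖R s‖ := by
          rw [hnorm_main]; linarith
      _ ≤ ‖(m.count μ₀ : ℂ) * (1 - μ₀ * ((s : ℂ) / μ₀))⁻¹ + R s‖ := htriangle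
  have hblow : Filter.Tendsto (fun s : ℝ => ‖H s‖)
      (nhdsWithin 1 (Set.Iio (1 : ℝ))) atTop := by
    apply tendsto_atTop_mono' _ hmono
    apply tendsto_atTop_add_const_right
    apply Filter.Tendsto.const_mul_atTop (by linarith : (0 : ℝ) < cnt)
    have h1 : Filter.Tendsto (fun s : ℝ => 1 - s) (nhdsWithin 1 (Set.Iio 1))
        (nhdsWithin 0 (Set.Ioi 0)) := by
      apply tendsto_nhdsWithin_of_tendsto_nhds_of_eventually_within
      · have hco : Continuous (fun s : ℝ => 1 - s) := continuous_const.sub continuous_id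
        have h2 : Filter.Tendsto (fun s : ℝ => 1 - s) (nhds 1) (nhds 0) := by
          have := hco.tendsto (1 : ℝ)
          simpa using this
        exact h2.mono_left nhdsWithin_le_nhds
      · filter_upwards [self_mem_nhdsWithin] with s hs
        exact sub_pos.mpr (Set.mem_Iio.mp hs)
    exact tendsto_inv_nhdsGT_zero.comp h1
  have hfinal : ∀ᶠ s in nhdsWithin (1 : ℝ) (Set.Iio 1), CC < ‖H s‖ :=
    hblow.eventually_gt_atTop CC
  have hio : ∀ᶠ s in nhdsWithin (1 : ℝ) (Set.Iio 1), s ∈ Set.Ioo (0 : ℝ) 1 :=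
    Ioo_mem_nhdsLT_of_mem (by norm_num : (1 : ℝ) ∈ Set.Ioc (0 : ℝ) 1)
  obtain ⟨s, hs1, hs2⟩ := (hfinal.and hio).exists
  exact absurd (hHb s hs2) (not_le.2 hs1)

end Aux

/-- The spectral radius of a square real matrix: the maximal absolute value of
the roots in `ℂ` of its characteristic polynomial. -/
noncomputable def specRadM {r : ℕ} (M : Matrix (Fin r) (Fin r) ℝ) : ℝ :=
  ((((M.charpoly.map (algebraMap ℝ ℂ)).roots.map fun z => ‖z‖₊).sup : NNReal) : ℝ)

/-- For `C` invertible,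
`limsup_n |tr(C⁻¹·(D·C⁻¹)^n·D)|^{1/n} = ρ(D·C⁻¹)`. -/
theorem limsup_abs_trace_inv_mul_pow_mul_rpow_eq_spectralRadius
    {r : ℕ} (hr : 1 ≤ r) (C D : Matrix (Fin r) (Fin r) ℝ)
    (hC : IsUnit C.det) :
    Filter.limsup
      (fun n : ℕ =>
        |Matrix.trace (C⁻¹ * (D * C⁻¹) ^ n * D)| ^ ((1 : ℝ) / n))
      Filter.atTop = specRadM (D * C⁻¹) := by
  classical
  set A : Matrix (Fin r) (Fin r) ℝ := D * C⁻¹ with hA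
  set φ : ℝ →+* ℂ := (algebraMap ℝ ℂ : ℝ →+* ℂ) with hφ
  set Aℂ : Matrix (Fin r) (Fin r) ℂ := A.map φ with hAc
  have hchar : Aℂ.charpoly = A.charpoly.map φ := Matrix.charpoly_map A φ
  set mm : Multiset ℂ := (A.charpoly.map (algebraMap ℝ ℂ)).roots with hmm
  have hroots : Aℂ.charpoly.roots = mm := by rw [hchar]
  have htr : ∀ n : ℕ, |Matrix.trace (C⁻¹ * (D * C⁻¹) ^ n * D)|
      = ‖(mm.map fun μ => μ ^ (n + 1)).sum‖ := by
    intro n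
    have h1 : Matrix.trace (C⁻¹ * (D * C⁻¹) ^ n * D) = Matrix.trace (A ^ (n + 1)) := by
      rw [Matrix.trace_mul_comm, ← mul_assoc, ← hA, ← pow_succ']
    have hmp : Aℂ ^ (n + 1) = (A ^ (n + 1)).map φ := by
      rw [hAc, ← RingHom.mapMatrix_apply, ← map_pow, RingHom.mapMatrix_apply]
    have h2 : ((Matrix.trace (A ^ (n + 1)) : ℝ) : ℂ) = Matrix.trace (Aℂ ^ (n + 1)) := by
      rw [hmp]
      simp [Matrix.trace, Matrix.map_apply, map_sum, hφ]
    have h3 := trace_pow_eq hr Aℂ (n + 1)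
    rw [h1, ← Real.norm_eq_abs, ← Complex.norm_real, h2, h3, hroots]
  have hm0 : mm ≠ 0 := by
    have hsplitc : Aℂ.charpoly.Splits := IsAlgClosed.splits _
    have hcard : Multiset.card Aℂ.charpoly.roots = r := by
      rw [Polynomial.splits_iff_card_roots.mp hsplitc, Matrix.charpoly_natDegree_eq_dim]
      simp
    rw [← hroots]
    intro h
    rw [h] at hcard
    simp at hcard
    omega
  have hfun : (fun n : ℕ => |Matrix.trace (C⁻¹ * (D * C⁻¹) ^ n * D)| ^ ((1 : ℝ) / n))
      = fun n : ℕ => ‖(mm.map fun μ => μ ^ (n + 1)).sum‖ ^ ((1 : ℝ) / n) :=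
    funext fun n => by rw [htr n]
  rw [hfun, limsup_powsum mm hm0]
  rfl
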